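/- Let ⟨Σ, ⊢⟩ be a single- (or multiple-) conclusion logic whose signature contains a connective of arity at least 2. Then ⊢ is characterized by the single Pmatrix obtained as the sum of its Lindenbaum bundle: ⊢ = ⊢_{⊕Lind(⟨Σ,⊢⟩)}. -/

import Mathlib

set_option autoImplicit false

namespace Paper

/-- Formulas over a signature: `C` is a universe of connective symbols with
arities `ar`, and a signature is a set `S` of connectives.  Variables are
indexed by `ℕ` (a countably infinite set). -/
inductive Fm (C : Type) (ar : C → ℕ) (S : Set C) : Type
  | var : ℕ → Fm C ar S
  | app : (c : C) → c ∈ S → (Fin (ar c) → Fm C ar S) → Fm C ar S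

variable {C : Type} {ar : C → ℕ}

/-- Application of a substitution. -/
def subst {S : Set C} (σ : ℕ → Fm C ar S) : Fm C ar S → Fm C ar S
  | .var n => σ n
  | .app c h args => .app c h (fun i => subst σ (args i))

/-- Embedding of formulas along a signature inclusion. -/
def emb {S0 S : Set C} (hS : S0 ⊆ S) : Fm C ar S0 → Fm C ar S
  | .var n => .var n
  | .app c h args => .app c (hS h) (fun i => emb hS (args i))

theorem unionLeft {S1 S2 : Set C} : S1 ⊆ S1 ∪ S2 := Set.subset_union_left
theorem unionRight {S1 S2 : Set C} : S2 ⊆ S1 ∪ S2 := Set.subset_union_right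

/-- Single-conclusion (Tarskian) consequence relation: reflexivity,
monotonicity, transitivity (cut) and substitution invariance. -/
def IsSC {S : Set C} (L : Set (Fm C ar S) → Fm C ar S → Prop) : Prop :=
  (∀ Γ A, A ∈ Γ → L Γ A) ∧
  (∀ Γ Γ' A, Γ ⊆ Γ' → L Γ A → L Γ' A) ∧
  (∀ Γ Δ A, (∀ B ∈ Δ, L Γ B) → L (Γ ∪ Δ) A → L Γ A) ∧
  (∀ σ Γ A, L Γ A → L (subst σ '' Γ) (subst σ A))

/-- Compactness of a single-conclusion relation. -/
def CompactSC {S : Set C} (L : Set (Fm C ar S) → Fm C ar S → Prop) : Prop :=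
  ∀ Γ A, L Γ A → ∃ Γ0, Γ0 ⊆ Γ ∧ Γ0.Finite ∧ L Γ0 A

/-- Image of a single-conclusion relation along a signature inclusion. -/
def embRelSC {S0 S : Set C} (hS : S0 ⊆ S)
    (L : Set (Fm C ar S0) → Fm C ar S0 → Prop) :
    Set (Fm C ar S) → Fm C ar S → Prop :=
  fun Γ A => ∃ Γ0 A0, L Γ0 A0 ∧ Γ = emb hS '' Γ0 ∧ A = emb hS A0

/-- `L` is the least single-conclusion logic containing `Base`. -/
def LeastSC {S : Set C} (Base L : Set (Fm C ar S) → Fm C ar S → Prop) : Prop :=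
  IsSC L ∧ (∀ Γ A, Base Γ A → L Γ A) ∧
  (∀ L', IsSC L' → (∀ Γ A, Base Γ A → L' Γ A) → ∀ Γ A, L Γ A → L' Γ A)

/-- `L` is the combination (fibring) of the single-conclusion logics
`L1`, `L2`: the least single-conclusion logic over `S1 ∪ S2` extending both. -/
def IsCombSC {S1 S2 : Set C}
    (L1 : Set (Fm C ar S1) → Fm C ar S1 → Prop)
    (L2 : Set (Fm C ar S2) → Fm C ar S2 → Prop)
    (L : Set (Fm C ar (S1 ∪ S2)) → Fm C ar (S1 ∪ S2) → Prop) : Prop :=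
  LeastSC (fun Γ A => embRelSC unionLeft L1 Γ A ∨ embRelSC unionRight L2 Γ A) L

/-- Multiple-conclusion consequence relation: overlap, dilution,
cut for sets, substitution invariance. -/
def IsMC {S : Set C} (Cn : Set (Fm C ar S) → Set (Fm C ar S) → Prop) : Prop :=
  (∀ Γ Δ, (Γ ∩ Δ).Nonempty → Cn Γ Δ) ∧
  (∀ Γ Δ Γ' Δ', Cn Γ Δ → Cn (Γ ∪ Γ') (Δ ∪ Δ')) ∧
  (∀ Γ Δ (Ω : Set (Fm C ar S)),
    (∀ Ω1 Ω2, Ω1 ∪ Ω2 = Ω → Ω1 ∩ Ω2 = ∅ → Cn (Γ ∪ Ω1) (Ω2 ∪ Δ)) → Cn Γ Δ) ∧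
  (∀ σ Γ Δ, Cn Γ Δ → Cn (subst σ '' Γ) (subst σ '' Δ))

def embRelMC {S0 S : Set C} (hS : S0 ⊆ S)
    (Cn : Set (Fm C ar S0) → Set (Fm C ar S0) → Prop) :
    Set (Fm C ar S) → Set (Fm C ar S) → Prop :=
  fun Γ Δ => ∃ Γ0 Δ0, Cn Γ0 Δ0 ∧ Γ = emb hS '' Γ0 ∧ Δ = emb hS '' Δ0

def LeastMC {S : Set C} (Base Cn : Set (Fm C ar S) → Set (Fm C ar S) → Prop) : Prop :=
  IsMC Cn ∧ (∀ Γ Δ, Base Γ Δ → Cn Γ Δ) ∧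
  (∀ Cn', IsMC Cn' → (∀ Γ Δ, Base Γ Δ → Cn' Γ Δ) → ∀ Γ Δ, Cn Γ Δ → Cn' Γ Δ)

def IsCombMC {S1 S2 : Set C}
    (C1 : Set (Fm C ar S1) → Set (Fm C ar S1) → Prop)
    (C2 : Set (Fm C ar S2) → Set (Fm C ar S2) → Prop)
    (Cn : Set (Fm C ar (S1 ∪ S2)) → Set (Fm C ar (S1 ∪ S2)) → Prop) : Prop :=
  LeastMC (fun Γ Δ => embRelMC unionLeft C1 Γ Δ ∨ embRelMC unionRight C2 Γ Δ) Cn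

/-- Multiple-conclusion relation determined by a set of bivaluations. -/
def mcBiv {S : Set C} (B : Set (Fm C ar S → Prop)) :
    Set (Fm C ar S) → Set (Fm C ar S) → Prop :=
  fun Γ Δ => ∀ b ∈ B, (∃ A ∈ Γ, ¬ b A) ∨ (∃ A ∈ Δ, b A)

/-- Single-conclusion relation determined by a set of bivaluations. -/
def scBiv {S : Set C} (B : Set (Fm C ar S → Prop)) :
    Set (Fm C ar S) → Fm C ar S → Prop :=
  fun Γ A => ∀ b ∈ B, (∀ B' ∈ Γ, b B') → b A

/-- A set of bivaluations is closed under substitutions. -/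
def SubstClosed {S : Set C} (B : Set (Fm C ar S → Prop)) : Prop :=
  ∀ b ∈ B, ∀ σ : ℕ → Fm C ar S, (fun A => b (subst σ A)) ∈ B

/-- Meet-closure of a set of bivaluations. -/
def meetCl {S : Set C} (B : Set (Fm C ar S → Prop)) : Set (Fm C ar S → Prop) :=
  {b | ∃ X, X ⊆ B ∧ b = fun A => ∀ b' ∈ X, b' A}

/-- A skeleton bijection for a signature inclusion `S0 ⊆ S`: it commutes
with `S0`-connectives and it maps variables and monoliths to variables. -/
structure Skel (ar : C → ℕ) {S0 S : Set C} (hS : S0 ⊆ S) where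
  toFun : Fm C ar S → Fm C ar S0
  bij : Function.Bijective toFun
  comm : ∀ (c : C) (hc : c ∈ S0) (args : Fin (ar c) → Fm C ar S),
    toFun (.app c (hS hc) args) = .app c hc (fun i => toFun (args i))
  mono : ∀ (c : C) (hc : c ∈ S) (args : Fin (ar c) → Fm C ar S),
    c ∉ S0 → ∃ n, toFun (.app c hc args) = .var n
  var : ∀ n : ℕ, ∃ m : ℕ, toFun (.var n) = .var m

/-- Extension of a set of bivaluations along the skeleton map. -/
def extBiv {S0 S : Set C} {hS : S0 ⊆ S} (sk : Skel ar hS)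
    (B : Set (Fm C ar S0 → Prop)) : Set (Fm C ar S → Prop) :=
  {b | ∃ b0 ∈ B, b = fun A => b0 (sk.toFun A)}

/-- Partial non-deterministic matrices (PNmatrices). -/
structure PN (C : Type) (ar : C → ℕ) (S : Set C) where
  V : Type
  D : Set V
  tbl : ∀ c : C, c ∈ S → (Fin (ar c) → V) → Set V

/-- Valuations of a PNmatrix. -/
def IsVal {S : Set C} (M : PN C ar S) (v : Fm C ar S → M.V) : Prop :=
  ∀ (c : C) (h : c ∈ S) (args : Fin (ar c) → Fm C ar S),
    v (.app c h args) ∈ M.tbl c h (fun i => v (args i))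

/-- Bivaluations induced by a PNmatrix. -/
def BVal {S : Set C} (M : PN C ar S) : Set (Fm C ar S → Prop) :=
  {b | ∃ v, IsVal M v ∧ b = fun A => v A ∈ M.D}

def scPN {S : Set C} (M : PN C ar S) : Set (Fm C ar S) → Fm C ar S → Prop :=
  scBiv (BVal M)

def mcPN {S : Set C} (M : PN C ar S) : Set (Fm C ar S) → Set (Fm C ar S) → Prop :=
  mcBiv (BVal M)

/-- Extension of a PNmatrix to a larger signature: new connectives are
interpreted fully non-deterministically. -/
def extPN {S0 S : Set C} (hS : S0 ⊆ S) (M : PN C ar S0) : PN C ar S where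
  V := M.V
  D := M.D
  tbl c _ args := {y | ∀ hc : c ∈ S0, y ∈ M.tbl c hc args}

/-- Strict product of two PNmatrices. -/
def sprod {S1 S2 : Set C} (M1 : PN C ar S1) (M2 : PN C ar S2) :
    PN C ar (S1 ∪ S2) where
  V := {p : M1.V × M2.V // p.1 ∈ M1.D ↔ p.2 ∈ M2.D}
  D := {p | p.val.1 ∈ M1.D ∧ p.val.2 ∈ M2.D}
  tbl c _ args :=
    {p | (∀ hc : c ∈ S1, p.val.1 ∈ M1.tbl c hc (fun i => (args i).val.1)) ∧
         (∀ hc : c ∈ S2, p.val.2 ∈ M2.tbl c hc (fun i => (args i).val.2))}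

/-- Theories of a single-conclusion relation. -/
def IsTheorySC {S : Set C} (L : Set (Fm C ar S) → Fm C ar S → Prop)
    (Γ : Set (Fm C ar S)) : Prop :=
  ∀ A, L Γ A → A ∈ Γ

/-- A PNmatrix is saturated if every consistent theory of its
single-conclusion logic is the set of designated formulas of a valuation. -/
def Saturated {S : Set C} (M : PN C ar S) : Prop :=
  ∀ Γ : Set (Fm C ar S), IsTheorySC (scPN M) Γ → Γ ≠ Set.univ →
    ∃ v, IsVal M v ∧ Γ = {A | v A ∈ M.D}

/-- The ω-power of a PNmatrix. -/
def omegaPow {S : Set C} (M : PN C ar S) : PN C ar S where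
  V := ℕ → M.V
  D := {x | ∀ i, x i ∈ M.D}
  tbl c h args := {y | ∀ i, y i ∈ M.tbl c h (fun k => args k i)}

/-- Strict homomorphisms of PNmatrices (rexpansions). -/
def IsHom {S0 S : Set C} (hS : S0 ⊆ S) (M : PN C ar S) (M0 : PN C ar S0)
    (h : M.V → M0.V) : Prop :=
  (∀ x, h x ∈ M0.D ↔ x ∈ M.D) ∧
  (∀ (c : C) (hc : c ∈ S0) (args : Fin (ar c) → M.V) (y : M.V),
    y ∈ M.tbl c (hS hc) args → h y ∈ M0.tbl c hc (fun i => h (args i)))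

/-- Sum of a family of PNmatrices over a common signature. -/
def psum {S : Set C} {I : Type} (Ms : I → PN C ar S) : PN C ar S where
  V := (i : I) × (Ms i).V
  D := {p | p.2 ∈ (Ms p.1).D}
  tbl c h args :=
    {p | ∃ xs : Fin (ar c) → (Ms p.1).V,
      (∀ k, args k = ⟨p.1, xs k⟩) ∧ p.2 ∈ (Ms p.1).tbl c h xs}

/-- Lindenbaum matrix with designated set `Γ`. -/
def lind {S : Set C} (Γ : Set (Fm C ar S)) : PN C ar S where
  V := Fm C ar S
  D := Γ
  tbl c h args := {Fm.app c h args}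

/-- Reduct of a PNmatrix to a subsignature. -/
def reduct {S0 S : Set C} (hS : S0 ⊆ S) (M : PN C ar S) : PN C ar S0 where
  V := M.V
  D := M.D
  tbl c hc := M.tbl c (hS hc)

/-- One-variable formulas (only the variable `0` occurs). -/
inductive OnlyVar0 {C : Type} {ar : C → ℕ} {S : Set C} : Fm C ar S → Prop
  | var : OnlyVar0 (.var 0)
  | app (c : C) (h : c ∈ S) (args : Fin (ar c) → Fm C ar S) :
      (∀ i, OnlyVar0 (args i)) → OnlyVar0 (.app c h args)

/-- `S_M(x)`: values of a one-variable `S0`-formula over valuations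
of `M` sending the variable to `x`. -/
def SMset {S0 S : Set C} (hS : S0 ⊆ S) (M : PN C ar S)
    (s : Fm C ar S0) (x : M.V) : Set M.V :=
  {w | ∃ v, IsVal M v ∧ v (.var 0) = x ∧ w = v (emb hS s)}

/-- `M` is `S0`-monadic. -/
def Monadic {S0 S : Set C} (hS : S0 ⊆ S) (M : PN C ar S) : Prop :=
  ∀ x y : M.V, x ≠ y → ∃ s : Fm C ar S0, OnlyVar0 s ∧
    (SMset hS M s x).Nonempty ∧ (SMset hS M s y).Nonempty ∧
    ((SMset hS M s x ⊆ M.D ∧ SMset hS M s y ∩ M.D = ∅) ∨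
     (SMset hS M s y ⊆ M.D ∧ SMset hS M s x ∩ M.D = ∅))

/-- Strict product of a PNmatrix over `S0 ⊆ S` with one over `S`
(the union of the signatures being `S`). -/
def sprodL {S0 S : Set C} (hS : S0 ⊆ S) (M1 : PN C ar S0) (M2 : PN C ar S) :
    PN C ar S where
  V := {p : M1.V × M2.V // p.1 ∈ M1.D ↔ p.2 ∈ M2.D}
  D := {p | p.val.1 ∈ M1.D ∧ p.val.2 ∈ M2.D}
  tbl c h args :=
    {p | (∀ hc : c ∈ S0, p.val.1 ∈ M1.tbl c hc (fun i => (args i).val.1)) ∧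
         p.val.2 ∈ M2.tbl c h (fun i => (args i).val.2)}

/-- All substitution instances (over `S1 ∪ S2`) of axiom schemata `Ax ⊆ Fm_{S2}`. -/
def axInst {S1 S2 : Set C} (Ax : Set (Fm C ar S2)) : Set (Fm C ar (S1 ∪ S2)) :=
  {B | ∃ A ∈ Ax, ∃ σ, B = subst σ (emb unionRight A)}

/-- The Nmatrix `M_Ax` associated to a set of axiom schemata. -/
def MAx (S1 : Set C) {S2 : Set C} (Ax : Set (Fm C ar S2)) : PN C ar (S1 ∪ S2) where
  V := {p : Fm C ar (S1 ∪ S2) × Bool // p.1 ∈ axInst (S1 := S1) Ax → p.2 = true}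
  D := {p | p.val.2 = true}
  tbl c h args := {p | p.val.1 = Fm.app c h (fun i => (args i).val.1)}


theorem subst_id {S : Set C} (A : Fm C ar S) : subst Fm.var A = A := by
  induction A with
  | var n => rfl
  | app c h args ih =>
    show Fm.app c h (fun i => subst Fm.var (args i)) = Fm.app c h args
    exact congrArg (Fm.app c h) (funext ih)

/-- Characterization of the bivaluations of a sum of Lindenbaum matrices,
assuming a connective of arity at least 2 is present. -/
theorem bval_psum_lind {S : Set C} (hbin : ∃ c ∈ S, 2 ≤ ar c)
    {I : Type} (f : I → Set (Fm C ar S)) (b : Fm C ar S → Prop) :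
    b ∈ BVal (psum (fun i => lind (f i))) ↔
      ∃ i σ, b = fun A => subst σ A ∈ f i := by
  constructor
  · rintro ⟨v, hv, rfl⟩
    obtain ⟨c, hc, h2⟩ := hbin
    have hcomp : ∀ A B : Fm C ar S, (v A).1 = (v B).1 := by
      intro A B
      obtain ⟨xs, hk, -⟩ :=
        hv c hc (fun k => if k.val = 0 then A else B)
      have hA := hk ⟨0, by omega⟩
      have hB := hk ⟨1, by omega⟩
      simp only [show ((⟨0, by omega⟩ : Fin (ar c)) : Fin (ar c)).val = 0 from rfl] at hA
      simp at hA hB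
      exact (congrArg Sigma.fst hA).trans (congrArg Sigma.fst hB).symm
    have hsub : ∀ A : Fm C ar S,
        ((v A).2 : Fm C ar S) = subst (fun n => (v (Fm.var n)).2) A := by
      intro A
      induction A with
      | var n => rfl
      | app c' h' args ih =>
        obtain ⟨xs, hk, hmem⟩ := hv c' h' args
        have hx : ∀ k, xs k = ((v (args k)).2 : Fm C ar S) := by
          intro k
          exact (congrArg
            (fun p : (i : I) × Fm C ar S => p.2) (hk k)).symm
        have hm : ((v (Fm.app c' h' args)).2 : Fm C ar S) = Fm.app c' h' xs := hmem
        rw [hm]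
        show Fm.app c' h' xs =
          Fm.app c' h' (fun k => subst (fun n => (v (Fm.var n)).2) (args k))
        refine congrArg (Fm.app c' h') (funext fun k => ?_)
        rw [hx k, ih k]
    refine ⟨(v (Fm.var 0)).1, fun n => (v (Fm.var n)).2, ?_⟩
    funext A
    have h1 := hcomp A (Fm.var 0)
    have h2 := hsub A
    show (((v A).2 : Fm C ar S) ∈ f (v A).1) =
      (subst (fun n => (v (Fm.var n)).2) A ∈ f (v (Fm.var 0)).1)
    rw [← h2, h1]; rfl
  · rintro ⟨i, σ, rfl⟩
    refine ⟨fun A => ⟨i, subst σ A⟩, ?_, rfl⟩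
    intro c h args
    exact ⟨fun k => subst σ (args k), fun k => rfl, rfl⟩

/-- any single- (or multiple-) conclusion logic over a signature
with a connective of arity at least 2 is characterized by the sum of its
Lindenbaum bundle. -/
theorem statement16 {C : Type} {ar : C → ℕ} {S : Set C}
    (hbin : ∃ c ∈ S, 2 ≤ ar c) :
    (∀ L : Set (Fm C ar S) → Fm C ar S → Prop, IsSC L →
      L = scPN (psum (fun Γ : {Γ : Set (Fm C ar S) // IsTheorySC L Γ} =>
        lind Γ.1))) ∧
    (∀ Cn : Set (Fm C ar S) → Set (Fm C ar S) → Prop, IsMC Cn →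
      Cn = mcPN (psum (fun Γ : {Γ : Set (Fm C ar S) // ¬ Cn Γ Γᶜ} =>
        lind Γ.1))) := by
  constructor
  · intro L hL
    obtain ⟨hrefl, hmono, hcut, hsubst⟩ := hL
    funext Γ A
    apply propext
    constructor
    · intro h b hb hΓ
      rw [bval_psum_lind hbin (fun Γ : {Γ : Set (Fm C ar S) // IsTheorySC L Γ} => Γ.1)] at hb
      obtain ⟨i, σ, rfl⟩ := hb
      apply i.2
      refine hmono _ _ _ ?_ (hsubst σ Γ A h)
      rintro _ ⟨B', hB', rfl⟩
      exact hΓ B' hB'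
    · intro h
      have hth : IsTheorySC L {B | L Γ B} := by
        intro A hA
        refine hcut Γ {B | L Γ B} A (fun B hB => hB) ?_
        exact hmono _ _ _ Set.subset_union_right hA
      have hb : (fun A => subst Fm.var A ∈ {B | L Γ B}) ∈
          BVal (psum (fun Γ' : {Γ' : Set (Fm C ar S) // IsTheorySC L Γ'} => lind Γ'.1)) := by
        rw [bval_psum_lind hbin]
        exact ⟨⟨{B | L Γ B}, hth⟩, Fm.var, rfl⟩
      have := h _ hb (fun B hB => by rw [subst_id]; exact hrefl Γ B hB)
      rwa [subst_id] at this
  · intro Cn hCn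
    obtain ⟨hov, hdil, hcut, hsubst⟩ := hCn
    funext Γ Δ
    apply propext
    constructor
    · intro h b hb
      rw [bval_psum_lind hbin (fun Ω : {Ω : Set (Fm C ar S) // ¬ Cn Ω Ωᶜ} => Ω.1)] at hb
      obtain ⟨i, σ, rfl⟩ := hb
      by_contra hcon
      push_neg at hcon
      obtain ⟨hΓ, hΔ⟩ := hcon
      apply i.2
      have hd := hdil _ _ i.1 (i.1)ᶜ (hsubst σ Γ Δ h)
      have e1 : subst σ '' Γ ∪ i.1 = i.1 := by
        apply Set.union_eq_self_of_subset_left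
        rintro _ ⟨B, hB, rfl⟩; exact hΓ B hB
      have e2 : subst σ '' Δ ∪ (i.1)ᶜ = (i.1)ᶜ := by
        apply Set.union_eq_self_of_subset_left
        rintro _ ⟨B, hB, rfl⟩; exact hΔ B hB
      rwa [e1, e2] at hd
    · intro h
      apply hcut Γ Δ Set.univ
      intro Ω1 Ω2 hun hdis
      have hΩ2 : Ω2 = Ω1ᶜ := by
        ext x
        constructor
        · intro hx hx1
          exact (Set.eq_empty_iff_forall_notMem.mp hdis x ⟨hx1, hx⟩).elim
        · intro hx
          rcases (Set.eq_univ_iff_forall.mp hun x).imp id id with h1 | h1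
          · exact absurd h1 hx
          · exact h1
      by_cases hc : Cn Ω1 Ω1ᶜ
      · have := hdil _ _ Γ Δ hc
        rw [Set.union_comm Ω1 Γ, ← hΩ2] at this
        exact this
      · have hb : (fun A => subst Fm.var A ∈ Ω1) ∈
            BVal (psum (fun Ω : {Ω : Set (Fm C ar S) // ¬ Cn Ω Ωᶜ} => lind Ω.1)) := by
          rw [bval_psum_lind hbin]
          exact ⟨⟨Ω1, hc⟩, Fm.var, rfl⟩
        rcases h _ hb with ⟨A, hA, hA1⟩ | ⟨A, hA, hA1⟩
        · rw [subst_id] at hA1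
          apply hov
          refine ⟨A, Or.inl hA, Or.inl ?_⟩
          rw [hΩ2]; exact hA1
        · rw [subst_id] at hA1
          exact hov _ _ ⟨A, Or.inr hA1, Or.inr hA⟩

end Paper
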